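/- arXiv:2412.18005 — 7 statements merged into one kernel-verified Lean document; each statement's English description precedes it below -/
import Mathlib

section
/- Let n ≥ 1 and k ≥ 1. Let D ⊆ ℝⁿ be a convex set of affine dimension k (i.e., the vector span of D has dimension k), let C ⊆ D be a nonempty convex extreme subset of D (IsExtreme ℝ D C) of affine dimension k − 1, and let f : ℝⁿ → ℝ be an affine map that is constant with value c on C and nonconstant on D. Then either f(x) ≤ c for all x ∈ D, or f(x) ≥ c for all x ∈ D; and moreover {x ∈ D : f(x) = c} = C. -/
open Set


lemma aux_extreme_mem {n : ℕ} {D C : Set (Fin n → ℝ)}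
    (hext : IsExtreme ℝ D C) (hCne : C.Nonempty) (hC : Convex ℝ C)
    {x : Fin n → ℝ} (hxD : x ∈ D) (hx : x ∈ affineSpan ℝ C) : x ∈ C := by
  obtain ⟨p, hp⟩ := hCne.intrinsicInterior hC
  rw [mem_intrinsicInterior] at hp
  obtain ⟨q, hq, -⟩ := hp
  set g : ℝ → affineSpan ℝ C := fun t =>
    ⟨t • ((q : Fin n → ℝ) - x) + q, by
      simpa using AffineSubspace.smul_vsub_vadd_mem _ t q.2 hx q.2⟩ with hg
  have hcont : Continuous g := by
    apply Continuous.subtype_mk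
    continuity
  have hg0 : g 0 = q := by
    apply Subtype.ext
    simp [hg]
  have hev : ∀ᶠ t in nhds (0 : ℝ), g t ∈ interior (((↑) : affineSpan ℝ C → Fin n → ℝ) ⁻¹' C) :=
    hcont.continuousAt.eventually_mem (isOpen_interior.mem_nhds (by rw [hg0]; exact hq))
  rw [Metric.eventually_nhds_iff] at hev
  obtain ⟨ε, hε, hball⟩ := hev
  set t : ℝ := ε / 2 with ht
  have htpos : 0 < t := by positivity
  have hyC : ((g t : affineSpan ℝ C) : Fin n → ℝ) ∈ C := by
    have h := hball (show dist t 0 < ε by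
      rw [Real.dist_eq, sub_zero, abs_of_pos htpos]; linarith)
    exact Set.mem_preimage.mp (interior_subset h)
  have hseg : (q : Fin n → ℝ) ∈ openSegment ℝ x ((g t : affineSpan ℝ C) : Fin n → ℝ) := by
    refine ⟨t / (1 + t), 1 / (1 + t), by positivity, by positivity, ?_, ?_⟩
    · field_simp
      ring
    · show (t / (1 + t)) • x + (1 / (1 + t)) • (t • ((q : Fin n → ℝ) - x) + q) = q
      have h1t : (1 : ℝ) + t ≠ 0 := by positivity
      match_scalars <;> field_simp <;> ring
  exact (hext.2 hxD (hext.1 hyC) (show (q : Fin n → ℝ) ∈ C from Set.mem_preimage.mp (interior_subset hq)) hseg)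
/-- If `C` is a `(k-1)`-dimensional face of a `k`-dimensional convex set `D`
and `f` is an affine map constant (with value `c`) on `C` and nonconstant on `D`, then
`f ≤ c` on `D` or `f ≥ c` on `D`, and equality holds exactly on `C`. -/
theorem stmt1 (n k : ℕ) (hn : 1 ≤ n) (hk : 1 ≤ k)
    (D : Set (Fin n → ℝ)) (hD : Convex ℝ D)
    (hDdim : Module.finrank ℝ (vectorSpan ℝ D) = k)
    (C : Set (Fin n → ℝ)) (hCne : C.Nonempty) (hC : Convex ℝ C)
    (hext : IsExtreme ℝ D C)
    (hCdim : Module.finrank ℝ (vectorSpan ℝ C) = k - 1)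
    (f : (Fin n → ℝ) →ᵃ[ℝ] ℝ) (c : ℝ)
    (hfc : ∀ x ∈ C, f x = c)
    (hfD : ∃ x ∈ D, ∃ y ∈ D, f x ≠ f y) :
    ((∀ x ∈ D, f x ≤ c) ∨ (∀ x ∈ D, c ≤ f x)) ∧ {x ∈ D | f x = c} = C := by
  obtain ⟨p, hpC⟩ := hCne
  obtain ⟨u, huD, v, hvD, huv⟩ := hfD
  -- the submodule W
  set W : Submodule ℝ (Fin n → ℝ) := vectorSpan ℝ D ⊓ LinearMap.ker f.linear with hW
  have hCW : vectorSpan ℝ C ≤ W := by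
    rw [vectorSpan_def]
    apply Submodule.span_le.mpr
    rintro w ⟨a, ha, b, hb, rfl⟩
    refine ⟨vsub_mem_vectorSpan ℝ (hext.1 ha) (hext.1 hb), ?_⟩
    show f.linear (a -ᵥ b) = 0
    rw [AffineMap.linearMap_vsub]
    simp [hfc a ha, hfc b hb]
  have huvW : (u - v) ∉ W := by
    intro h
    have : f.linear (u - v) = 0 := h.2
    rw [show u - v = u -ᵥ v from rfl, AffineMap.linearMap_vsub] at this
    exact huv (by linarith [sub_eq_zero.mp this])
  have hWlt : W < vectorSpan ℝ D :=
    lt_of_le_of_ne inf_le_left (fun h => huvW (h ▸ vsub_mem_vectorSpan ℝ huD hvD))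
  have hWdim : Module.finrank ℝ W < k := hDdim ▸ Submodule.finrank_lt_finrank_of_lt hWlt
  have hWC : vectorSpan ℝ C = W :=
    Submodule.eq_of_le_of_finrank_le hCW (by omega)
  -- key : points of D where f = c are in C
  have key : ∀ x ∈ D, f x = c → x ∈ C := by
    intro x hxD hfx
    apply aux_extreme_mem hext ⟨p, hpC⟩ hC hxD
    have hxp : x - p ∈ vectorSpan ℝ C := by
      rw [hWC]
      refine ⟨vsub_mem_vectorSpan ℝ hxD (hext.1 hpC), ?_⟩
      show f.linear (x -ᵥ p) = 0
      rw [AffineMap.linearMap_vsub]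
      simp [hfx, hfc p hpC]
    have := AffineSubspace.vadd_mem_of_mem_direction
      (by rwa [direction_affineSpan] : x - p ∈ (affineSpan ℝ C).direction)
      (mem_affineSpan ℝ hpC)
    simpa using this
  have hEq : {x ∈ D | f x = c} = C := by
    ext x
    exact ⟨fun ⟨h1, h2⟩ => key x h1 h2, fun h => ⟨hext.1 h, hfc x h⟩⟩
  refine ⟨?_, hEq⟩
  by_contra hcon
  push_neg at hcon
  obtain ⟨⟨x, hxD, hxc⟩, ⟨y, hyD, hyc⟩⟩ := hcon
  -- f x > c, f y < c
  set t : ℝ := (f x - c) / (f x - f y) with htdef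
  have hxy : f y < f x := lt_trans hyc hxc
  have ht0 : 0 < t := by
    apply div_pos <;> linarith
  have ht1 : t < 1 := by
    rw [div_lt_one (by linarith)]; linarith
  set z := AffineMap.lineMap x y t with hz
  have hzseg : z ∈ openSegment ℝ x y := by
    rw [openSegment_eq_image_lineMap]
    exact ⟨t, ⟨ht0, ht1⟩, rfl⟩
  have hzD : z ∈ D := hD.segment_subset hxD hyD (openSegment_subset_segment ℝ x y hzseg)
  have hfz : f z = c := by
    rw [hz, AffineMap.apply_lineMap, AffineMap.lineMap_apply, smul_eq_mul, vsub_eq_sub, vadd_eq_add, htdef]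
    have h : f x - f y ≠ 0 := by linarith
    field_simp
    ring
  have hzC : z ∈ C := key z hzD hfz
  have := (hext.2 hxD hyD hzC hzseg)
  exact absurd (hfc x this) (by linarith)
end

section
/- Let n ≥ 1. Let C ⊆ ℝⁿ be a convex set of affine dimension 2 and let f : ℝⁿ → ℝ be an affine map that is nonconstant on C. Let v₁ ≠ v₂ be points with f(v₁) = f(v₂) = c such that the closed segment e = [v₁, v₂] is an extreme subset of C (a 'flat edge'). Then for all w₁, w₂ ∈ C with w₁ ∉ e and w₂ ∉ e, one has f(w₁) ≠ c, f(w₂) ≠ c, and (f(w₁) − c)·(f(w₂) − c) > 0 (i.e., all points of C off the flat edge lie strictly on the same side of the level set of c). -/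
/-- Flat-edge forcing. If the segment `[v₁, v₂]` is a flat edge (an extreme
subset on which the affine map `f` takes the constant value `c`) of a 2-dimensional convex
set `C` on which `f` is nonconstant, then all points of `C` off the edge lie strictly on
the same side of the level set `f = c`. -/
theorem stmt2 (n : ℕ) (hn : 1 ≤ n)
    (C : Set (Fin n → ℝ)) (hC : Convex ℝ C)
    (hCdim : Module.finrank ℝ (vectorSpan ℝ C) = 2)
    (f : (Fin n → ℝ) →ᵃ[ℝ] ℝ)
    (hfC : ∃ x ∈ C, ∃ y ∈ C, f x ≠ f y)
    (v₁ v₂ : Fin n → ℝ) (hne : v₁ ≠ v₂) (c : ℝ)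
    (h1 : f v₁ = c) (h2 : f v₂ = c)
    (hext : IsExtreme ℝ C (segment ℝ v₁ v₂)) :
    ∀ w₁ ∈ C, ∀ w₂ ∈ C, w₁ ∉ segment ℝ v₁ v₂ → w₂ ∉ segment ℝ v₁ v₂ →
      f w₁ ≠ c ∧ f w₂ ≠ c ∧ 0 < (f w₁ - c) * (f w₂ - c) := by
  have hv₁C : v₁ ∈ C := hext.1 (left_mem_segment ℝ v₁ v₂)
  have hv₂C : v₂ ∈ C := hext.1 (right_mem_segment ℝ v₁ v₂)
  -- Key: any point of C where f takes value c lies on the segment.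
  have key : ∀ w ∈ C, f w = c → w ∈ segment ℝ v₁ v₂ := by
    intro w hwC hwc
    by_contra hw
    have hwne1 : w ≠ v₁ := fun h => hw (h ▸ left_mem_segment ℝ v₁ v₂)
    have hwne2 : w ≠ v₂ := fun h => hw (h ▸ right_mem_segment ℝ v₁ v₂)
    by_cases hcol : Collinear ℝ ({v₁, w, v₂} : Set (Fin n → ℝ))
    · rcases hcol.wbtw_or_wbtw_or_wbtw with h | h | h
      · exact hw (mem_segment_iff_wbtw.2 h)
      · have hseg : v₂ ∈ openSegment ℝ w v₁ :=
          mem_openSegment_of_ne_left_right hwne2 hne h.mem_segment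
        exact hw (hext.2 hwC hv₁C (right_mem_segment ℝ v₁ v₂) hseg)
      · have hseg : v₁ ∈ openSegment ℝ v₂ w :=
          mem_openSegment_of_ne_left_right hne.symm hwne1 h.mem_segment
        exact hw (hext.2 hwC hv₂C (left_mem_segment ℝ v₁ v₂) (by rwa [openSegment_symm] at hseg))
    · -- non-collinear case: f would be constant on C, contradiction
      have hai : AffineIndependent ℝ ![v₁, w, v₂] :=
        affineIndependent_iff_not_collinear_set.2 hcol
      have hrange : Set.range ![v₁, w, v₂] = ({v₁, w, v₂} : Set (Fin n → ℝ)) := by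
        ext x
        simp [Matrix.range_cons, Matrix.range_empty]
        tauto
      have hfr : Module.finrank ℝ (vectorSpan ℝ ({v₁, w, v₂} : Set (Fin n → ℝ))) = 2 := by
        have := hai.finrank_vectorSpan (n := 2) (by simp)
        rwa [hrange] at this
      have hsub : ({v₁, w, v₂} : Set (Fin n → ℝ)) ⊆ C := by
        rintro x (rfl | rfl | rfl) <;> assumption
      have hle : vectorSpan ℝ ({v₁, w, v₂} : Set (Fin n → ℝ)) ≤ vectorSpan ℝ C :=
        vectorSpan_mono ℝ hsub
      have heq : vectorSpan ℝ ({v₁, w, v₂} : Set (Fin n → ℝ)) = vectorSpan ℝ C :=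
        Submodule.eq_of_le_of_finrank_le hle (by rw [hCdim, hfr])
      have hval : ∀ p ∈ ({v₁, w, v₂} : Set (Fin n → ℝ)), f p = c := by
        rintro p (rfl | rfl | rfl) <;> assumption
      have hker : vectorSpan ℝ ({v₁, w, v₂} : Set (Fin n → ℝ)) ≤ LinearMap.ker f.linear := by
        rw [vectorSpan_def, Submodule.span_le]
        rintro u ⟨p, hp, q, hq, rfl⟩
        simp only [SetLike.mem_coe, LinearMap.mem_ker]
        have := f.linearMap_vsub p q
        rw [this, hval p hp, hval q hq]
        simp
      obtain ⟨x, hx, y, hy, hxy⟩ := hfC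
      apply hxy
      have hmem : x -ᵥ y ∈ vectorSpan ℝ C := vsub_mem_vectorSpan ℝ hx hy
      rw [← heq] at hmem
      have h0 := hker hmem
      rw [LinearMap.mem_ker, f.linearMap_vsub] at h0
      have : f x - f y = 0 := h0
      linarith
  intro w₁ hw₁ w₂ hw₂ he₁ he₂
  have hfw₁ : f w₁ ≠ c := fun h => he₁ (key w₁ hw₁ h)
  have hfw₂ : f w₂ ≠ c := fun h => he₂ (key w₂ hw₂ h)
  refine ⟨hfw₁, hfw₂, ?_⟩
  -- helper: there cannot be points on strictly opposite sides
  have opp : ∀ x ∈ C, ∀ y ∈ C, x ∉ segment ℝ v₁ v₂ → f x < c → c < f y → False := by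
    intro x hx y hy hxe hxc hyc
    set t : ℝ := (c - f x) / (f y - f x) with ht
    have hden : 0 < f y - f x := by linarith
    have ht0 : 0 < t := div_pos (by linarith) hden
    have ht1 : t < 1 := (div_lt_one hden).2 (by linarith)
    set z := AffineMap.lineMap x y t with hz
    have hzseg : z ∈ openSegment ℝ x y := by
      rw [openSegment_eq_image_lineMap]
      exact ⟨t, ⟨ht0, ht1⟩, rfl⟩
    have hzC : z ∈ C := hC.openSegment_subset hx hy hzseg
    have hfz : f z = c := by
      have hmul : t * (f y - f x) = c - f x := by
        rw [ht]; exact div_mul_cancel₀ _ hden.ne'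
      rw [hz, AffineMap.apply_lineMap]
      simp only [AffineMap.lineMap_apply_module, smul_eq_mul]
      linear_combination hmul
    have hze : z ∈ segment ℝ v₁ v₂ := key z hzC hfz
    exact hxe (hext.2 hx hy hze hzseg)
  rcases lt_or_gt_of_ne hfw₁ with h | h
  · rcases lt_or_gt_of_ne hfw₂ with h' | h'
    · have : 0 < (c - f w₁) * (c - f w₂) := mul_pos (by linarith) (by linarith)
      nlinarith
    · exact absurd (opp w₁ hw₁ w₂ hw₂ he₁ h h') (fun h => h)
  · rcases lt_or_gt_of_ne hfw₂ with h' | h'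
    · exact absurd (opp w₂ hw₂ w₁ hw₁ he₂ h' h) (fun h => h)
    · exact mul_pos (by linarith) (by linarith)
end

section
/- Let n ≥ 1. Let C ⊆ ℝⁿ be a convex set of affine dimension 2, and let f : ℝⁿ → ℝ be an affine map with linear part ℓ. Let v₁ ≠ v₂ be points and let d₁, d₂ ∈ ℝⁿ be nonzero vectors. Suppose: the closed segment e = [v₁, v₂] is an extreme subset of C; the rays e₁ = {v₁ + t·d₁ : t ≥ 0} and e₂ = {v₂ + t·d₂ : t ≥ 0} are extreme subsets of C; e ∩ e₁ = {v₁}; e ∩ e₂ = {v₂}; ℓ(d₁) < 0 (f decreases along e₁, i.e., e₁ is oriented towards v₁); and ℓ(d₂) > 0 (f increases along e₂, i.e., e₂ is oriented away from v₂). Then f(v₁) < f(v₂). -/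
/-- No-zigzags lemma. Let `C` be a 2-dimensional convex set, `e = [v₁, v₂]`
an extreme segment, and `e₁`, `e₂` extreme rays emanating from `v₁`, `v₂` in directions
`d₁`, `d₂`, meeting `e` only at `v₁`, `v₂` respectively. If the affine map `f` decreases
along `e₁` and increases along `e₂`, then `f v₁ < f v₂`. -/
theorem stmt3 (n : ℕ) (hn : 1 ≤ n)
    (C : Set (Fin n → ℝ)) (hC : Convex ℝ C)
    (hCdim : Module.finrank ℝ (vectorSpan ℝ C) = 2)
    (f : (Fin n → ℝ) →ᵃ[ℝ] ℝ)
    (v₁ v₂ : Fin n → ℝ) (hne : v₁ ≠ v₂)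
    (d₁ d₂ : Fin n → ℝ) (hd₁ : d₁ ≠ 0) (hd₂ : d₂ ≠ 0)
    (he : IsExtreme ℝ C (segment ℝ v₁ v₂))
    (he₁ : IsExtreme ℝ C {x | ∃ t : ℝ, 0 ≤ t ∧ x = v₁ + t • d₁})
    (he₂ : IsExtreme ℝ C {x | ∃ t : ℝ, 0 ≤ t ∧ x = v₂ + t • d₂})
    (hcap₁ : segment ℝ v₁ v₂ ∩ {x | ∃ t : ℝ, 0 ≤ t ∧ x = v₁ + t • d₁} = {v₁})
    (hcap₂ : segment ℝ v₁ v₂ ∩ {x | ∃ t : ℝ, 0 ≤ t ∧ x = v₂ + t • d₂} = {v₂})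
    (hl₁ : f.linear d₁ < 0) (hl₂ : 0 < f.linear d₂) :
    f v₁ < f v₂ := by
  have hv₁e : v₁ ∈ segment ℝ v₁ v₂ := left_mem_segment ℝ v₁ v₂
  have hv₂e : v₂ ∈ segment ℝ v₁ v₂ := right_mem_segment ℝ v₁ v₂
  have hv₁C : v₁ ∈ C := he.1 hv₁e
  have hv₂C : v₂ ∈ C := he.1 hv₂e
  have hmem₁ : ∀ t : ℝ, 0 ≤ t → v₁ + t • d₁ ∈ C := fun t ht => he₁.1 ⟨t, ht, rfl⟩
  have hmem₂ : ∀ t : ℝ, 0 ≤ t → v₂ + t • d₂ ∈ C := fun t ht => he₂.1 ⟨t, ht, rfl⟩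
  -- (A) d₁ is not a scalar multiple of v₂ - v₁
  have hA : ∀ c : ℝ, d₁ ≠ c • (v₂ - v₁) := by
    intro c hc
    rcases lt_trichotomy c 0 with h | h | h
    · -- v₁ lies strictly between v₁ + d₁ and v₂
      have hp : v₁ + d₁ ∈ C := by simpa using hmem₁ 1 zero_le_one
      have h1c : (0:ℝ) < 1 - c := by linarith
      have hop : v₁ ∈ openSegment ℝ (v₁ + d₁) v₂ := by
        refine ⟨1/(1-c), -c/(1-c), by positivity, div_pos (by linarith) h1c,
          by field_simp; ring, ?_⟩
        rw [hc]
        match_scalars <;> (field_simp; try ring)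
      have h1 := he.left_mem_of_mem_openSegment hp hv₂C hv₁e hop
      have h2 : v₁ + d₁ ∈ ({v₁} : Set _) := by
        rw [← hcap₁]; exact ⟨h1, ⟨1, zero_le_one, by simp⟩⟩
      exact hd₁ (by simpa using h2)
    · exact hd₁ (by simpa [h] using hc)
    · have hc0 : c ≠ 0 := ne_of_gt h
      have : v₂ ∈ ({v₁} : Set _) := by
        rw [← hcap₁]
        refine ⟨hv₂e, 1/c, by positivity, ?_⟩
        rw [hc]; match_scalars <;> (field_simp; try ring)
      have h3 : v₂ = v₁ := by simpa using this
      exact hne h3.symm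
  -- (B) d₂ is not a scalar multiple of v₂ - v₁
  have hB : ∀ c : ℝ, d₂ ≠ c • (v₂ - v₁) := by
    intro c hc
    rcases lt_trichotomy c 0 with h | h | h
    · have hc0 : c ≠ 0 := ne_of_lt h
      have : v₁ ∈ ({v₂} : Set _) := by
        rw [← hcap₂]
        refine ⟨hv₁e, -1/c, div_nonneg_of_nonpos (by norm_num) h.le, ?_⟩
        rw [hc]; match_scalars <;> (field_simp; try ring)
      have h3 : v₁ = v₂ := by simpa using this
      exact hne h3
    · exact hd₂ (by simpa [h] using hc)
    · have hp : v₂ + d₂ ∈ C := by simpa using hmem₂ 1 zero_le_one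
      have h1c : (0:ℝ) < 1 + c := by linarith
      have hop : v₂ ∈ openSegment ℝ v₁ (v₂ + d₂) := by
        refine ⟨c/(1+c), 1/(1+c), div_pos h h1c, by positivity, by field_simp; ring, ?_⟩
        rw [hc]
        match_scalars <;> (field_simp; try ring)
      have h1 := he.right_mem_of_mem_openSegment hv₁C hp hv₂e hop
      have h2 : v₂ + d₂ ∈ ({v₂} : Set _) := by
        rw [← hcap₂]; exact ⟨h1, ⟨1, zero_le_one, by simp⟩⟩
      exact hd₂ (by simpa using h2)
  -- linear independence
  have hwne : v₂ - v₁ ≠ 0 := sub_ne_zero.mpr hne.symm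
  have hLI : LinearIndependent ℝ ![v₂ - v₁, d₁] := by
    rw [LinearIndependent.pair_iff]
    intro s t hst
    rcases eq_or_ne t 0 with rfl | ht
    · have hs : s = 0 := by
        rcases (by simpa using hst : s = 0 ∨ v₂ - v₁ = 0) with h | h
        · exact h
        · exact absurd h hwne
      exact ⟨hs, rfl⟩
    · exfalso
      apply hA (-s/t)
      have h1 : t • d₁ = -(s • (v₂ - v₁)) := by
        rw [eq_neg_iff_add_eq_zero, add_comm]; exact hst
      rw [← neg_smul] at h1
      calc d₁ = (t⁻¹ * t) • d₁ := by rw [inv_mul_cancel₀ ht, one_smul]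
        _ = t⁻¹ • (t • d₁) := by rw [mul_smul]
        _ = t⁻¹ • ((-s) • (v₂ - v₁)) := by rw [h1]
        _ = (-s/t) • (v₂ - v₁) := by rw [smul_smul]; congr 1; ring
  -- span {v₂ - v₁, d₁} equals the vector span of C
  have hsub : Submodule.span ℝ ({v₂ - v₁, d₁} : Set (Fin n → ℝ)) ≤ vectorSpan ℝ C := by
    rw [Submodule.span_le]
    rintro x hx
    rcases hx with rfl | rfl
    · simpa using vsub_mem_vectorSpan ℝ hv₂C hv₁C
    · simpa using vsub_mem_vectorSpan ℝ (hmem₁ 1 zero_le_one) hv₁C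
  have hrange : Set.range ![v₂ - v₁, d₁] = ({v₂ - v₁, d₁} : Set (Fin n → ℝ)) := by
    simp [Matrix.range_cons, Matrix.range_empty, Set.pair_comm]
  have hrank : Module.finrank ℝ (Submodule.span ℝ ({v₂ - v₁, d₁} : Set (Fin n → ℝ))) = 2 := by
    rw [← hrange, finrank_span_eq_card hLI]
    simp
  have hspan : Submodule.span ℝ ({v₂ - v₁, d₁} : Set (Fin n → ℝ)) = vectorSpan ℝ C :=
    Submodule.eq_of_le_of_finrank_le hsub (by rw [hCdim, hrank])
  have hd₂mem : d₂ ∈ Submodule.span ℝ ({v₂ - v₁, d₁} : Set (Fin n → ℝ)) := by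
    rw [hspan]
    simpa using vsub_mem_vectorSpan ℝ (hmem₂ 1 zero_le_one) hv₂C
  obtain ⟨α, β, hαβ⟩ := Submodule.mem_span_pair.mp hd₂mem
  -- hαβ : α • (v₂ - v₁) + β • d₁ = d₂
  have hβ0 : β ≠ 0 := by
    intro h
    exact hB α (by rw [← hαβ, h]; simp)
  -- β > 0 : d₁ and d₂ point to the same side of the line through v₁, v₂
  have hβ : 0 < β := by
    rcases hβ0.lt_or_gt with h | h
    swap
    · exact h
    exfalso
    set t : ℝ := 1/(2*(|α|+1)) with ht_def
    have ht : 0 < t := by rw [ht_def]; positivity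
    set s : ℝ := t * (-β) with hs_def
    have hs : 0 < s := by rw [hs_def]; exact mul_pos ht (by linarith)
    set μ : ℝ := (1 + t*α)/2 with hμ_def
    have habs : t * |α| ≤ 1/2 := by
      rw [ht_def, div_mul_eq_mul_div, one_mul, div_le_div_iff₀ (by positivity) (by norm_num)]
      nlinarith [abs_nonneg α]
    have hta₁ : -(1/2 : ℝ) ≤ t * α := by
      nlinarith [neg_abs_le α, ht.le]
    have hta₂ : t * α ≤ 1/2 := by
      nlinarith [le_abs_self α, ht.le]
    have hμ0 : 0 ≤ μ := by rw [hμ_def]; linarith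
    have hμ1 : μ ≤ 1 := by rw [hμ_def]; linarith
    have hseg : (1-μ) • v₁ + μ • v₂ ∈ segment ℝ v₁ v₂ :=
      ⟨1-μ, μ, by linarith, hμ0, by ring, rfl⟩
    have hq : (1-μ) • v₁ + μ • v₂ ∈ openSegment ℝ (v₁ + s • d₁) (v₂ + t • d₂) := by
      refine ⟨1/2, 1/2, by norm_num, by norm_num, by norm_num, ?_⟩
      rw [← hαβ]
      match_scalars <;> simp only [hμ_def, hs_def] <;> ring
    have h1 := he.left_mem_of_mem_openSegment (hmem₁ s hs.le) (hmem₂ t ht.le) hseg hq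
    have h2 : v₁ + s • d₁ ∈ ({v₁} : Set _) := by
      rw [← hcap₁]; exact ⟨h1, s, hs.le, rfl⟩
    have h3 : s • d₁ = 0 := by simpa using h2
    rcases smul_eq_zero.mp h3 with h4 | h4
    · exact hs.ne' h4
    · exact hd₁ h4
  -- α > 0 : no zigzag
  have hα : 0 < α := by
    rcases lt_trichotomy α 0 with h | h | h
    · exfalso
      have hα0 : α ≠ 0 := ne_of_lt h
      set t : ℝ := -1/α with ht_def
      have ht : 0 < t := by rw [ht_def]; exact div_pos_of_neg_of_neg (by norm_num) h
      have hq₁ : v₂ + t • d₂ ∈ {x | ∃ r : ℝ, 0 ≤ r ∧ x = v₁ + r • d₁} := by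
        refine ⟨t * β, (mul_pos ht hβ).le, ?_⟩
        rw [← hαβ]
        match_scalars <;> simp only [ht_def] <;> field_simp <;> ring
      have hop : v₂ + t • d₂ ∈ openSegment ℝ v₂ (v₂ + (2*t) • d₂) := by
        refine ⟨1/2, 1/2, by norm_num, by norm_num, by norm_num, ?_⟩
        match_scalars <;> ring
      have h1 := he₁.left_mem_of_mem_openSegment hv₂C (hmem₂ (2*t) (by positivity)) hq₁ hop
      obtain ⟨r, hr, hveq⟩ := h1
      have hr0 : r ≠ 0 := by
        intro h0
        rw [h0] at hveq
        simp at hveq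
        exact hne hveq.symm
      apply hA r⁻¹
      have : v₂ - v₁ = r • d₁ := by rw [hveq]; abel
      rw [this, smul_smul, inv_mul_cancel₀ hr0, one_smul]
    · exfalso
      have : f.linear d₂ = β * f.linear d₁ := by
        rw [← hαβ, h]; simp
      nlinarith
    · exact h
  -- conclude
  have hℓ : f.linear d₂ = α * f.linear (v₂ - v₁) + β * f.linear d₁ := by
    rw [← hαβ]; simp
  have hL : 0 < f.linear (v₂ - v₁) := by
    by_contra hcon
    push_neg at hcon
    nlinarith [mul_pos hβ (neg_pos.mpr hl₁), mul_nonneg hα.le (neg_nonneg.mpr hcon)]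
  have hfin : f.linear (v₂ - v₁) = f v₂ - f v₁ := by
    have := f.linearMap_vsub v₂ v₁
    simpa [vsub_eq_sub] using this
  linarith [hfin ▸ hL]
end

section
/- Let α be a type with decidable equality, let K be a finite family of finite subsets (Finsets) of α, and let u ∈ α be such that for every σ ∈ K: σ ∪ {u} ∈ K, and if u ∈ σ then σ \ {u} ∈ K (K is a cone with apex u). Define V = {(σ, σ ∪ {u}) : σ ∈ K, u ∉ σ}. Then V is a discrete vector field on K in which every element of K belongs to exactly one pair, and V is acyclic. -/
/-- A discrete vector field on a family `X` of finite sets: a set of pairs `(C, D)` with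
`C, D ∈ X`, `C ⊆ D`, `|D| = |C| + 1`, such that every element of `X` belongs to at most
one pair. -/
def IsDVF {α : Type*} (X : Set (Finset α)) (V : Set (Finset α × Finset α)) : Prop :=
  (∀ p ∈ V, p.1 ∈ X ∧ p.2 ∈ X ∧ p.1 ⊆ p.2 ∧ p.2.card = p.1.card + 1) ∧
  ∀ p ∈ V, ∀ q ∈ V, ∀ σ : Finset α,
    (σ = p.1 ∨ σ = p.2) → (σ = q.1 ∨ σ = q.2) → p = q

/-- A `V`-path: a sequence of pairs `(C₀, D₀), …, (C_r, D_r)` of `V` such that for each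
`i < r`: `C_{i+1} ⊆ D_i`, `|C_{i+1}| = |D_i| − 1` and `C_{i+1} ≠ C_i`. -/
def IsVPath {α : Type*} (V : Set (Finset α × Finset α)) (r : ℕ)
    (p : ℕ → Finset α × Finset α) : Prop :=
  (∀ i ≤ r, p i ∈ V) ∧
  ∀ i < r, (p (i+1)).1 ⊆ (p i).2 ∧ (p (i+1)).1.card + 1 = (p i).2.card ∧
    (p (i+1)).1 ≠ (p i).1

/-- `V` is acyclic if there is no non-trivial closed `V`-path. -/
def IsAcyclicDVF {α : Type*} (V : Set (Finset α × Finset α)) : Prop :=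
  ¬ ∃ (r : ℕ) (p : ℕ → Finset α × Finset α), 1 ≤ r ∧ IsVPath V r p ∧
    (p 0).1 ⊆ (p r).2 ∧ (p 0).1.card + 1 = (p r).2.card ∧ (p 0).1 ≠ (p r).1

/-- If `K` is a cone with apex `u`, then pairing each cell `σ` not containing
`u` with `σ ∪ {u}` yields a complete acyclic discrete vector field on `K`. -/
theorem stmt6 {α : Type*} [DecidableEq α] (K : Finset (Finset α)) (u : α)
    (hcone : ∀ σ ∈ K, insert u σ ∈ K ∧ (u ∈ σ → σ.erase u ∈ K))
    (V : Set (Finset α × Finset α))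
    (hV : V = {p | ∃ σ ∈ K, u ∉ σ ∧ p = (σ, insert u σ)}) :
    IsDVF (↑K) V ∧ (∀ σ ∈ K, ∃! p, p ∈ V ∧ (σ = p.1 ∨ σ = p.2)) ∧ IsAcyclicDVF V := by
  subst hV
  refine ⟨⟨?_, ?_⟩, ?_, ?_⟩
  · rintro p ⟨σ, hσ, hu, rfl⟩
    exact ⟨hσ, (hcone σ hσ).1, Finset.subset_insert _ _, Finset.card_insert_of_notMem hu⟩
  · rintro p ⟨σ, hσ, hu, rfl⟩ q ⟨τ, hτ, hv, rfl⟩ x hx hx'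
    simp only [Prod.mk.injEq] at *
    rcases hx with rfl | rfl
    · rcases hx' with rfl | rfl
      · exact ⟨rfl, rfl⟩
      · exact absurd (Finset.mem_insert_self u τ) hu
    · rcases hx' with h | h
      · exact absurd (h ▸ Finset.mem_insert_self u σ) hv
      · have : σ = τ := by
          have := congrArg (Finset.erase · u) h
          simpa [Finset.erase_insert hu, Finset.erase_insert hv] using this
        exact ⟨this, by rw [this]⟩
  · intro σ hσ
    by_cases hu : u ∈ σ
    · refine ⟨(σ.erase u, σ), ⟨⟨σ.erase u, (hcone σ hσ).2 hu, Finset.notMem_erase u σ,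
        by rw [Finset.insert_erase hu]⟩, Or.inr rfl⟩, ?_⟩
      rintro q ⟨⟨τ, hτ, hv, rfl⟩, h | h⟩
      · obtain rfl : σ = τ := h
        exact absurd hu hv
      · simp only [Prod.mk.injEq]
        constructor
        · rw [h, Finset.erase_insert hv]
        · exact h.symm
    · refine ⟨(σ, insert u σ), ⟨⟨σ, hσ, hu, rfl⟩, Or.inl rfl⟩, ?_⟩
      rintro q ⟨⟨τ, hτ, hv, rfl⟩, h | h⟩
      · simp [h]
      · exact absurd (h ▸ Finset.mem_insert_self u τ) hu
  · rintro ⟨r, p, hr, ⟨hmem, hstep⟩, -, -, -⟩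
    obtain ⟨hsub, hcard, hne⟩ := hstep 0 hr
    obtain ⟨σ, hσ, hu0, hp0⟩ := hmem 0 (Nat.zero_le r)
    obtain ⟨τ, hτ, hu1, hp1⟩ := hmem 1 hr
    have hp1' : p (0 + 1) = (τ, insert u τ) := hp1
    rw [hp0, hp1'] at hsub hcard hne
    have hcard' : τ.card + 1 = σ.card + 1 := by
      rw [← Finset.card_insert_of_notMem hu0]; exact hcard
    have hsub' : τ ⊆ σ := fun x hx => by
      rcases Finset.mem_insert.mp (hsub hx) with rfl | h
      · exact absurd hx hu1
      · exact h
    exact hne (Finset.eq_of_subset_of_card_le hsub' (by omega : σ.card ≤ τ.card))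
end

section
/- Let k ≥ 1 and let v, a₁, …, a_k, b₁, …, b_k be 2k + 1 distinct elements of a type α with decidable equality. Let P be the family of all finite subsets F of {v, a₁, …, a_k, b₁, …, b_k} such that v ∈ F and, for each i, not both a_i ∈ F and b_i ∈ F. Then there exists a discrete vector field V on P that is acyclic and in which every element of P belongs to exactly one pair except for a single unpaired element, namely the (k+1)-element set {v, b₁, …, b_k}. -/
/-- On the combinatorial model `P` of the local lower star of an index-`k`
PL critical vertex `v` (the cone at `v` over the boundary of a `k`-dimensional
cross-polytope with antipodal vertex pairs `{aᵢ, bᵢ}`), there is an acyclic discrete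
vector field in which every cell belongs to exactly one pair except the single unpaired
cell `{v, b₁, …, b_k}`. -/
theorem stmt7 {α : Type*} [DecidableEq α] (k : ℕ) (hk : 1 ≤ k)
    (v : α) (a b : Fin k → α)
    (ha : Function.Injective a) (hb : Function.Injective b)
    (hab : ∀ i j, a i ≠ b j) (hav : ∀ i, a i ≠ v) (hbv : ∀ i, b i ≠ v)
    (P : Set (Finset α))
    (hP : P = {F | v ∈ F ∧ (∀ x ∈ F, x = v ∨ (∃ i, x = a i) ∨ (∃ i, x = b i)) ∧
      ∀ i, ¬ (a i ∈ F ∧ b i ∈ F)}) :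
    ∃ V : Set (Finset α × Finset α), IsDVF P V ∧ IsAcyclicDVF V ∧
      (∀ σ ∈ P, σ ≠ insert v (Finset.image b Finset.univ) →
        ∃! p, p ∈ V ∧ (σ = p.1 ∨ σ = p.2)) ∧
      ∀ p ∈ V, p.1 ≠ insert v (Finset.image b Finset.univ) ∧
        p.2 ≠ insert v (Finset.image b Finset.univ) := by
  classical
  have hbne : ∀ i j : Fin k, b j ≠ a i := fun i j => (hab i j).symm
  have hmemP : ∀ F : Finset α, F ∈ P ↔ (v ∈ F ∧
      (∀ x ∈ F, x = v ∨ (∃ i, x = a i) ∨ (∃ i, x = b i)) ∧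
      ∀ i, ¬ (a i ∈ F ∧ b i ∈ F)) := by
    intro F; rw [hP]; exact Iff.rfl
  -- minimal missing-b index is unique
  have huniq : ∀ (F : Finset α) (i i' : Fin k), (∀ j, j < i → b j ∈ F) → b i ∉ F →
      (∀ j, j < i' → b j ∈ F) → b i' ∉ F → i = i' := by
    intro F i i' h1 h2 h1' h2'
    rcases lt_trichotomy i i' with h | h | h
    · exact absurd (h1' i h) h2
    · exact h
    · exact absurd (h1 i' h) h2'
  have hbmem : ∀ (F : Finset α) (i j : Fin k), b j ∈ insert (a i) F ↔ b j ∈ F := by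
    intro F i j
    simp [Finset.mem_insert, hbne i j]
  have hinsP : ∀ F, F ∈ P → ∀ i : Fin k, b i ∉ F → insert (a i) F ∈ P := by
    intro F hF i hbi
    obtain ⟨hv, hel, hpair⟩ := (hmemP F).mp hF
    refine (hmemP _).mpr ⟨Finset.mem_insert_of_mem hv, ?_, ?_⟩
    · intro x hx
      rcases Finset.mem_insert.mp hx with h | h
      · exact Or.inr (Or.inl ⟨i, h⟩)
      · exact hel x h
    · rintro j ⟨haj, hbj⟩
      have hbj' : b j ∈ F := (hbmem F i j).mp hbj
      rcases Finset.mem_insert.mp haj with h | h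
      · have : j = i := ha h
        subst this
        exact hbi hbj'
      · exact hpair j ⟨h, hbj'⟩
  -- the vector field
  set V : Set (Finset α × Finset α) :=
    {p | p.1 ∈ P ∧ ∃ i : Fin k, (∀ j, j < i → b j ∈ p.1) ∧ b i ∉ p.1 ∧ a i ∉ p.1 ∧
      p.2 = insert (a i) p.1} with hV
  -- the key step lemma
  have hstep : ∀ (C C' : Finset α) (i i' : Fin k),
      b i ∉ C → a i ∉ C →
      (∀ j, j < i' → b j ∈ C') → b i' ∉ C' → a i' ∉ C' →
      C' ⊆ insert (a i) C → C'.card + 1 = (insert (a i) C).card → C' ≠ C → i' < i := by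
    intro C C' i i' hbi hai hm' hb' ha' hsub hcard hne
    have haiC' : a i ∈ C' := by
      by_contra hcon
      have h1 : C' ⊆ C := by
        intro x hx
        rcases Finset.mem_insert.mp (hsub hx) with h | h
        · exact absurd (h ▸ hx) hcon
        · exact h
      have h2 : C.card ≤ C'.card := by
        have := Finset.card_insert_of_notMem hai
        omega
      exact hne (Finset.eq_of_subset_of_card_le h1 h2)
    have hbiC' : b i ∉ C' := by
      intro h
      rcases Finset.mem_insert.mp (hsub h) with h' | h'
      · exact hbne i i h'
      · exact hbi h'
    have hle : i' ≤ i := not_lt.mp (fun hlt => hbiC' (hm' i hlt))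
    have hneq : i' ≠ i := fun h => ha' (h ▸ haiC')
    exact lt_of_le_of_ne hle hneq
  -- V is a DVF
  have hdvf : IsDVF P V := by
    constructor
    · rintro p ⟨hp1, i, hm, hbi, hai, hD⟩
      refine ⟨hp1, ?_, ?_, ?_⟩
      · rw [hD]; exact hinsP _ hp1 i hbi
      · rw [hD]; exact Finset.subset_insert _ _
      · rw [hD, Finset.card_insert_of_notMem hai]
    · rintro p ⟨hp1, i, hm, hbi, hai, hD⟩ q ⟨hq1, i', hm', hbi', hai', hD'⟩ σ hσp hσq
      rcases hσp with hσp | hσp <;> rcases hσq with hσq | hσq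
      · -- p.1 = q.1
        have hCC : p.1 = q.1 := hσp ▸ hσq
        have hii : i = i' := huniq p.1 i i' hm hbi (fun j hj => hCC ▸ hm' j hj) (hCC ▸ hbi')
        have : p.2 = q.2 := by rw [hD, hD', hCC, hii]
        exact Prod.ext hCC this
      · -- p.1 = q.2 : contradiction
        exfalso
        have hCq : p.1 = insert (a i') q.1 := hσp ▸ (hσq ▸ hD')
        have htrans : ∀ j : Fin k, b j ∈ p.1 ↔ b j ∈ q.1 := by
          intro j; rw [hCq]; exact hbmem _ i' j
        have hii : i = i' := huniq q.1 i i' (fun j hj => (htrans j).mp (hm j hj))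
          (fun h => hbi ((htrans i).mpr h)) hm' hbi'
        have : a i' ∈ p.1 := by rw [hCq]; exact Finset.mem_insert_self _ _
        rw [← hii] at this
        exact hai this
      · -- p.2 = q.1 : contradiction (symmetric)
        exfalso
        have hCq : q.1 = insert (a i) p.1 := hσq ▸ (hσp ▸ hD)
        have htrans : ∀ j : Fin k, b j ∈ q.1 ↔ b j ∈ p.1 := by
          intro j; rw [hCq]; exact hbmem _ i j
        have hii : i' = i := huniq p.1 i' i (fun j hj => (htrans j).mp (hm' j hj))
          (fun h => hbi' ((htrans i').mpr h)) hm hbi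
        have : a i ∈ q.1 := by rw [hCq]; exact Finset.mem_insert_self _ _
        rw [← hii] at this
        exact hai' this
      · -- p.2 = q.2
        have hDD : insert (a i) p.1 = insert (a i') q.1 := by
          rw [← hD, ← hD', ← hσp, ← hσq]
        have htrans : ∀ j : Fin k, b j ∈ p.1 ↔ b j ∈ q.1 := by
          intro j
          rw [← hbmem p.1 i j, hDD, hbmem]
        have hii : i = i' := huniq q.1 i i' (fun j hj => (htrans j).mp (hm j hj))
          (fun h => hbi ((htrans i).mpr h)) hm' hbi'
        have hCC : p.1 = q.1 := by
          have h1 : p.1 = (insert (a i) p.1).erase (a i) :=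
            (Finset.erase_insert hai).symm
          have h2 : q.1 = (insert (a i') q.1).erase (a i') :=
            (Finset.erase_insert hai').symm
          rw [h1, h2, hDD, hii]
        have : p.2 = q.2 := hσp ▸ hσq ▸ rfl
        exact Prod.ext hCC this
  refine ⟨V, hdvf, ?_, ?_, ?_⟩
  · -- acyclicity
    rintro ⟨r, p, hr, ⟨hmem, hpath⟩, hsub0, hcard0, hne0⟩
    have hdata : ∀ n : ℕ, ∃ i : Fin k, n ≤ r →
        ((∀ j, j < i → b j ∈ (p n).1) ∧ b i ∉ (p n).1 ∧ a i ∉ (p n).1 ∧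
          (p n).2 = insert (a i) (p n).1) := by
      intro n
      by_cases h : n ≤ r
      · obtain ⟨_, i, hi⟩ := hmem n h
        exact ⟨i, fun _ => hi⟩
      · exact ⟨⟨0, hk⟩, fun h' => absurd h' h⟩
    choose f hf using hdata
    have hdec : ∀ n, n < r → f (n + 1) < f n := by
      intro n hn
      obtain ⟨hm1, hb1, ha1, hD1⟩ := hf n (le_of_lt hn)
      obtain ⟨hm2, hb2, ha2, hD2⟩ := hf (n + 1) hn
      obtain ⟨hsub, hcard, hne⟩ := hpath n hn
      refine hstep (p n).1 (p (n + 1)).1 (f n) (f (n + 1)) hb1 ha1 hm2 hb2 ha2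
        (hD1 ▸ hsub) ?_ hne
      rw [← hD1]; exact hcard
    have hchain : ∀ n, n ≤ r → (f n : ℕ) + n ≤ (f 0 : ℕ) := by
      intro n
      induction n with
      | zero => intro _; omega
      | succ m ih =>
        intro hmr
        have h1 := ih (by omega)
        have h2 := hdec m (by omega)
        have h2' : (f (m + 1) : ℕ) < (f m : ℕ) := h2
        omega
    have hlast := hchain r le_rfl
    -- the closing step gives f 0 < f r
    obtain ⟨hm1, hb1, ha1, hD1⟩ := hf r le_rfl
    obtain ⟨hm2, hb2, ha2, hD2⟩ := hf 0 (Nat.zero_le r)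
    have hclose : f 0 < f r := hstep (p r).1 (p 0).1 (f r) (f 0) hb1 ha1 hm2 hb2 ha2
      (hD1 ▸ hsub0) (by rw [← hD1]; exact hcard0) hne0
    have : (f 0 : ℕ) < (f r : ℕ) := hclose
    omega
  · -- every non-top cell is in exactly one pair
    intro σ hσ hσtop
    obtain ⟨hv, hel, hpair⟩ := (hmemP σ).mp hσ
    have hex : ∃ j : Fin k, b j ∉ σ := by
      by_contra hcon
      push_neg at hcon
      apply hσtop
      ext x
      simp only [Finset.mem_insert, Finset.mem_image, Finset.mem_univ, true_and]
      constructor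
      · intro hx
        rcases hel x hx with h | ⟨i, h⟩ | ⟨i, h⟩
        · exact Or.inl h
        · exact absurd ⟨h ▸ hx, hcon i⟩ (hpair i)
        · exact Or.inr ⟨i, h.symm⟩
      · rintro (h | ⟨i, h⟩)
        · exact h ▸ hv
        · exact h ▸ hcon i
    set T := Finset.univ.filter (fun j : Fin k => b j ∉ σ) with hT
    have hTne : T.Nonempty := by
      obtain ⟨j, hj⟩ := hex
      exact ⟨j, by simp [hT, hj]⟩
    set i := T.min' hTne with hi
    have hbi : b i ∉ σ := by
      have := T.min'_mem hTne
      simp only [hT, Finset.mem_filter] at this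
      exact this.2
    have hmin : ∀ j, j < i → b j ∈ σ := by
      intro j hj
      by_contra hcon
      have : j ∈ T := by simp [hT, hcon]
      exact absurd (T.min'_le j this) (not_le.mpr hj)
    by_cases hai : a i ∈ σ
    · -- σ is the upper element of the pair (σ.erase (a i), σ)
      set C := σ.erase (a i) with hC
      have hCP : C ∈ P := by
        refine (hmemP C).mpr ⟨Finset.mem_erase.mpr ⟨(hav i).symm, hv⟩, ?_, ?_⟩
        · intro x hx
          exact hel x (Finset.erase_subset _ _ hx)
        · rintro j ⟨haj, hbj⟩
          exact hpair j ⟨Finset.erase_subset _ _ haj, Finset.erase_subset _ _ hbj⟩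
      have hσeq : σ = insert (a i) C := (Finset.insert_erase hai).symm
      have hpV : (C, σ) ∈ V := by
        refine ⟨hCP, i, ?_, ?_, Finset.notMem_erase _ _, hσeq⟩
        · intro j hj
          exact Finset.mem_erase.mpr ⟨hbne i j, hmin j hj⟩
        · intro h
          exact hbi (Finset.erase_subset _ _ h)
      refine ⟨(C, σ), ⟨hpV, Or.inr rfl⟩, ?_⟩
      rintro q ⟨hqV, hσq⟩
      exact hdvf.2 q hqV (C, σ) hpV σ hσq (Or.inr rfl)
    · -- σ is the lower element of the pair (σ, insert (a i) σ)
      have hpV : (σ, insert (a i) σ) ∈ V := ⟨hσ, i, hmin, hbi, hai, rfl⟩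
      refine ⟨(σ, insert (a i) σ), ⟨hpV, Or.inl rfl⟩, ?_⟩
      rintro q ⟨hqV, hσq⟩
      exact hdvf.2 q hqV _ hpV σ hσq (Or.inl rfl)
  · -- the top cell is unpaired
    rintro p ⟨hp1, i, hm, hbi, hai, hD⟩
    constructor
    · intro h
      apply hbi
      rw [h]
      exact Finset.mem_insert_of_mem (Finset.mem_image_of_mem b (Finset.mem_univ i))
    · intro h
      have : a i ∈ insert v (Finset.image b Finset.univ) := by
        rw [← h, hD]; exact Finset.mem_insert_self _ _
      rcases Finset.mem_insert.mp this with h' | h'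
      · exact hav i h'
      · obtain ⟨j, _, hj⟩ := Finset.mem_image.mp h'
        exact hab i j hj.symm
end

section
/- Let α be a type with decidable equality, let X be a finite family of finite subsets (Finsets) of α, let V be a discrete vector field on X, and let g : Finset α → ℝ. Suppose: (a) g(C) = g(D) for every pair (C, D) ∈ V; and (b) g(C') ≤ g(D) whenever C', D ∈ X with C' ⊆ D and |C'| = |D| − 1. If for every real number c the restriction of V to {σ ∈ X : g(σ) = c} (i.e., the set of pairs of V with both members in this level set) is acyclic, then V itself is acyclic. -/
/-- Gluing acyclic pairings. If `g` is constant on each pair of `V`,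
weakly increasing along codimension-one faces in `X`, and the restriction of `V` to each
level set of `g` is acyclic, then `V` is acyclic. -/
theorem stmt8 {α : Type*} [DecidableEq α] (X : Finset (Finset α))
    (V : Set (Finset α × Finset α)) (hV : IsDVF (↑X) V) (g : Finset α → ℝ)
    (ha : ∀ p ∈ V, g p.1 = g p.2)
    (hb : ∀ C' ∈ X, ∀ D ∈ X, C' ⊆ D → C'.card + 1 = D.card → g C' ≤ g D)
    (hlevel : ∀ c : ℝ, IsAcyclicDVF {p ∈ V | g p.1 = c ∧ g p.2 = c}) :
    IsAcyclicDVF V := by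

  rintro ⟨r, p, hr, ⟨hmem, hstep⟩, hsub, hcard, hne⟩
  have hX : ∀ i ≤ r, (p i).1 ∈ X ∧ (p i).2 ∈ X := by
    intro i hi
    obtain ⟨h1, h2, _, _⟩ := hV.1 _ (hmem i hi)
    exact ⟨h1, h2⟩
  have hdec : ∀ i < r, g (p (i+1)).1 ≤ g (p i).1 := by
    intro i hi
    obtain ⟨hsub', hcard', _⟩ := hstep i hi
    have h := hb _ (hX (i+1) (by omega)).1 _ (hX i (le_of_lt hi)).2 hsub' hcard'
    rw [← ha _ (hmem i (le_of_lt hi))] at h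
    exact h
  have hanti : ∀ j ≤ r, g (p j).1 ≤ g (p 0).1 := by
    intro j hj
    induction j with
    | zero => exact le_refl _
    | succ n ih => exact le_trans (hdec n (by omega)) (ih (by omega))
  have hclose : g (p 0).1 ≤ g (p r).1 := by
    have h := hb _ (hX 0 (by omega)).1 _ (hX r le_rfl).2 hsub hcard
    rwa [← ha _ (hmem r le_rfl)] at h
  have hanti2 : ∀ i ≤ r, g (p r).1 ≤ g (p i).1 := by
    intro i hi
    have key : ∀ k, i + k ≤ r → g (p (i + k)).1 ≤ g (p i).1 := by
      intro k
      induction k with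
      | zero => intro _; exact le_refl _
      | succ n ih =>
        intro hk
        have := hdec (i + n) (by omega)
        have := ih (by omega)
        calc g (p (i + (n+1))).1 = g (p ((i+n)+1)).1 := by ring_nf
        _ ≤ g (p (i+n)).1 := hdec (i + n) (by omega)
        _ ≤ g (p i).1 := ih (by omega)
    have := key (r - i) (by omega)
    rwa [Nat.add_sub_cancel' hi] at this
  set c := g (p 0).1 with hc
  have hall : ∀ i ≤ r, g (p i).1 = c := by
    intro i hi
    have h1 := hanti i hi
    have h2 := hanti2 i hi
    have h3 := hclose
    linarith [hanti r le_rfl]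
  apply hlevel c
  refine ⟨r, p, hr, ⟨?_, hstep⟩, hsub, hcard, hne⟩
  intro i hi
  refine ⟨hmem i hi, hall i hi, ?_⟩
  rw [← ha _ (hmem i hi)]
  exact hall i hi
end

section
/- Let n ≥ 1 and let f₁, …, f_n : ℝ² → ℝ be affine maps with nonzero linear parts, with zero sets (lines) L_i = f_i⁻¹({0}). Assume the lines are in general position: for all i ≠ j the intersection L_i ∩ L_j is a singleton, and no point of ℝ² lies on three pairwise distinct lines L_i, L_j, L_k. Then the complement ℝ² \ (⋃ᵢ L_i) has exactly 2n unbounded connected components. -/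
open Filter Topology

noncomputable section

def sg (b : Bool) : ℝ := if b then 1 else -1

lemma sg_ne_zero (b : Bool) : sg b ≠ 0 := by cases b <;> norm_num [sg]

lemma sg_unique {a b : Bool} {x : ℝ} (ha : 0 < sg a * x) (hb : 0 < sg b * x) : a = b := by
  cases a <;> cases b <;> simp [sg] at * <;> linarith

lemma sg_pos_ne {a : Bool} {x : ℝ} (ha : 0 < sg a * x) : x ≠ 0 := by
  rintro rfl; simp at ha

def Pat {m : ℕ} (g : Fin m → ((Fin 2 → ℝ) →ₗ[ℝ] ℝ)) (ε : Fin m → Bool) (v : Fin 2 → ℝ) : Prop :=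
  ∀ i, 0 < sg (ε i) * g i v

lemma Pat.smul {m : ℕ} {g : Fin m → ((Fin 2 → ℝ) →ₗ[ℝ] ℝ)} {ε : Fin m → Bool} {v : Fin 2 → ℝ}
    (h : Pat g ε v) {t : ℝ} (ht : 0 < t) : Pat g ε (t • v) := by
  intro i
  have := h i
  rw [map_smul, smul_eq_mul]
  nlinarith

lemma Pat.neg {m : ℕ} {g : Fin m → ((Fin 2 → ℝ) →ₗ[ℝ] ℝ)} {ε : Fin m → Bool} {v : Fin 2 → ℝ}
    (h : Pat g ε v) : Pat g (fun i => !ε i) (-v) := by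
  intro i
  have := h i
  rw [map_neg]
  cases hb : ε i <;> simp [hb, sg] at * <;> linarith

lemma Pat.unique {m : ℕ} {g : Fin m → ((Fin 2 → ℝ) →ₗ[ℝ] ℝ)} {ε ε' : Fin m → Bool} {v : Fin 2 → ℝ}
    (h : Pat g ε v) (h' : Pat g ε' v) : ε = ε' :=
  funext fun i => sg_unique (h i) (h' i)

/-- kernel of a nonzero functional on ℝ² is spanned by one nonzero vector -/
lemma ker_lemma (ℓ : (Fin 2 → ℝ) →ₗ[ℝ] ℝ) (h : ℓ ≠ 0) :
    ∃ v₀ : Fin 2 → ℝ, v₀ ≠ 0 ∧ ℓ v₀ = 0 ∧ ∀ u, ℓ u = 0 → ∃ t : ℝ, u = t • v₀ := by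
  set a := ℓ ((Pi.single 0 1 : Fin 2 → ℝ)) with ha
  set b := ℓ ((Pi.single 1 1 : Fin 2 → ℝ)) with hb
  have hrep : ∀ v : Fin 2 → ℝ, ℓ v = v 0 * a + v 1 * b := by
    intro v
    have hv : v = v 0 • (Pi.single 0 1 : Fin 2 → ℝ) + v 1 • (Pi.single 1 1 : Fin 2 → ℝ) := by
      ext j; fin_cases j <;> simp
    rw [ha, hb]
    conv_lhs => rw [hv]
    simp [map_add, map_smul, smul_eq_mul]
  have hab : a ≠ 0 ∨ b ≠ 0 := by
    by_contra hc
    push_neg at hc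
    apply h
    ext v
    · simp [hrep, hc.1, hc.2]
  refine ⟨![-b, a], ?_, ?_, ?_⟩
  · intro hz
    have h0 : (-b) = 0 := by have := congrFun hz 0; simpa using this
    have h1 : a = 0 := by have := congrFun hz 1; simpa using this
    rcases hab with h' | h' <;> [exact h' h1; exact h' (by linarith [neg_eq_zero.mp h0])]
  · rw [hrep]; simp; ring
  · intro u hu
    rw [hrep] at hu
    rcases eq_or_ne a 0 with h0 | h0
    · have hb0 : b ≠ 0 := by tauto
      have hu1 : u 1 = 0 := by
        have : u 1 * b = 0 := by rw [h0] at hu; linarith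
        rcases mul_eq_zero.mp this with h | h
        · exact h
        · exact absurd h hb0
      refine ⟨-(u 0) / b, ?_⟩
      ext j; fin_cases j <;> simp [hu1, h0] <;> field_simp
    · refine ⟨u 1 / a, ?_⟩
      ext j; fin_cases j <;> simp <;> field_simp <;> nlinarith [hu]

-- continuity of linear forms on ℝ²
lemma lin_cont (ℓ : (Fin 2 → ℝ) →ₗ[ℝ] ℝ) : Continuous ℓ :=
  ℓ.continuous_of_finiteDimensional

lemma expand (ℓ : (Fin 2 → ℝ) →ₗ[ℝ] ℝ) (s : ℝ) (v w : Fin 2 → ℝ) (δ : ℝ) :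
    s * ℓ (v + δ • w) = s * ℓ v + δ * (s * ℓ w) := by
  rw [map_add, map_smul, smul_eq_mul]; ring

/-- perturbation: strict sign conditions survive small perturbations -/
lemma perturb {m : ℕ} (g : Fin m → ((Fin 2 → ℝ) →ₗ[ℝ] ℝ)) (ε : Fin m → Bool) (v w : Fin 2 → ℝ)
    (h : ∀ i, 0 < sg (ε i) * g i v) :
    ∀ᶠ δ in 𝓝[>] (0:ℝ), ∀ i, 0 < sg (ε i) * g i (v + δ • w) := by
  rw [eventually_all]
  intro i
  have hc : Continuous (fun δ : ℝ => sg (ε i) * g i v + δ * (sg (ε i) * g i w)) := by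
    continuity
  have h0 : (fun δ : ℝ => sg (ε i) * g i v + δ * (sg (ε i) * g i w)) 0
      = sg (ε i) * g i v := by simp
  have : ∀ᶠ δ in 𝓝 (0:ℝ), 0 < sg (ε i) * g i v + δ * (sg (ε i) * g i w) := by
    have := (hc.tendsto 0).eventually (eventually_gt_nhds (h0 ▸ h i))
    exact this
  filter_upwards [nhdsWithin_le_nhds this] with δ hδ
  rw [expand]; exact hδ
lemma nhdsGT_neBot' : (𝓝[>] (0:ℝ)).NeBot := by infer_instance

/-- sharpening: nonneg signs at a nonzero vector can be made strict -/
lemma sharpen {m : ℕ} (g : Fin m → ((Fin 2 → ℝ) →ₗ[ℝ] ℝ)) (hg : ∀ i, g i ≠ 0)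
    (hker : ∀ i j, i ≠ j → ∀ v, g i v = 0 → g j v = 0 → v = 0)
    (ε : Fin m → Bool) (v : Fin 2 → ℝ) (hv : v ≠ 0)
    (h : ∀ i, 0 ≤ sg (ε i) * g i v) : ∃ v', Pat g ε v' := by
  by_cases hstrict : ∀ i, 0 < sg (ε i) * g i v
  · exact ⟨v, hstrict⟩
  push_neg at hstrict
  obtain ⟨i₀, hi₀⟩ := hstrict
  have hz : g i₀ v = 0 := by
    have h1 := h i₀
    have : sg (ε i₀) * g i₀ v = 0 := le_antisymm hi₀ h1
    rcases mul_eq_zero.mp this with h' | h'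
    · exact absurd h' (sg_ne_zero _)
    · exact h'
  -- all other coordinates are strict
  have hstrict' : ∀ j, j ≠ i₀ → 0 < sg (ε j) * g j v := by
    intro j hj
    rcases lt_or_eq_of_le (h j) with h' | h'
    · exact h'
    · exfalso
      have : g j v = 0 := by
        rcases mul_eq_zero.mp h'.symm with h'' | h''
        · exact absurd h'' (sg_ne_zero _)
        · exact h''
      exact hv (hker j i₀ hj v this hz)
  -- pick w with sign at i₀
  obtain ⟨w₀, hw₀⟩ : ∃ w₀, g i₀ w₀ ≠ 0 := by
    by_contra hc; push_neg at hc
    exact hg i₀ (LinearMap.ext fun x => by simpa using hc x)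
  set w : Fin 2 → ℝ := (sg (ε i₀) * g i₀ w₀) • w₀ with hw
  have hww : 0 < sg (ε i₀) * g i₀ w := by
    rw [hw, map_smul, smul_eq_mul]
    have h2 : sg (ε i₀) * (sg (ε i₀) * g i₀ w₀ * g i₀ w₀)
        = (sg (ε i₀))^2 * (g i₀ w₀)^2 := by ring
    rw [h2]
    have hsne := sg_ne_zero (ε i₀)
    positivity
  have hev : ∀ᶠ δ in 𝓝[>] (0:ℝ), ∀ i, 0 < sg (ε i) * g i (v + δ • w) := by
    rw [eventually_all]
    intro i
    rcases eq_or_ne i i₀ with rfl | hne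
    · filter_upwards [self_mem_nhdsWithin] with δ hδ
      rw [expand]
      rw [hz]
      have : (0:ℝ) < δ := hδ
      nlinarith
    · have hc : Continuous (fun δ : ℝ => sg (ε i) * g i v + δ * (sg (ε i) * g i w)) := by
        continuity
      have hpos := hstrict' i hne
      have : ∀ᶠ δ in 𝓝 (0:ℝ), 0 < sg (ε i) * g i v + δ * (sg (ε i) * g i w) := by
        have := (hc.tendsto 0).eventually (eventually_gt_nhds (show
          (0:ℝ) < sg (ε i) * g i v + 0 * (sg (ε i) * g i w) by simpa using hpos))
        simpa using this
      filter_upwards [nhdsWithin_le_nhds this] with δ hδ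
      rw [expand]; exact hδ
  obtain ⟨δ, hδ⟩ := hev.exists
  exact ⟨v + δ • w, hδ⟩
lemma Pat.of_smul {m : ℕ} {g : Fin m → ((Fin 2 → ℝ) →ₗ[ℝ] ℝ)} {ε : Fin m → Bool}
    {v : Fin 2 → ℝ} {t : ℝ} (ht : 0 < t) (h : Pat g ε (t • v)) : Pat g ε v := by
  have h2 := h.smul (t := t⁻¹) (by positivity)
  rwa [smul_smul, inv_mul_cancel₀ ht.ne', one_smul] at h2

lemma exists_ne_zero_map {ℓ : (Fin 2 → ℝ) →ₗ[ℝ] ℝ} (h : ℓ ≠ 0) : ∃ w, ℓ w ≠ 0 := by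
  by_contra hc; push_neg at hc
  exact h (LinearMap.ext fun x => by simpa using hc x)

lemma ncard_setOf {α : Type*} [Fintype α] (P : α → Prop) [DecidablePred P] :
    {x | P x}.ncard = (Finset.univ.filter P).card := by
  rw [← Set.ncard_coe_finset]
  congr 1
  ext x; simp

lemma boolcard (P : Bool → Prop) [DecidablePred P] :
    (Finset.univ.filter P).card = (if P true then 1 else 0) + (if P false then 1 else 0) := by
  rw [Finset.card_filter, Fintype.sum_bool]

lemma count_realized : ∀ (m : ℕ), 1 ≤ m → ∀ (g : Fin m → ((Fin 2 → ℝ) →ₗ[ℝ] ℝ)),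
    (∀ i, g i ≠ 0) → (∀ i j, i ≠ j → ∀ v, g i v = 0 → g j v = 0 → v = 0) →
    {ε : Fin m → Bool | ∃ v, Pat g ε v}.ncard = 2 * m := by
  intro m hm
  induction m, hm using Nat.le_induction with
  | base =>
    intro g hg hker
    have huniv : {ε : Fin 1 → Bool | ∃ v, Pat g ε v} = Set.univ := by
      ext ε
      simp only [Set.mem_setOf_eq, Set.mem_univ, iff_true]
      obtain ⟨w, hw⟩ := exists_ne_zero_map (hg 0)
      refine ⟨(sg (ε 0) * g 0 w) • w, ?_⟩
      intro i
      have hi : i = 0 := Subsingleton.elim _ _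
      subst hi
      rw [map_smul, smul_eq_mul]
      have h2 : sg (ε 0) * (sg (ε 0) * g 0 w * g 0 w) = (sg (ε 0))^2 * (g 0 w)^2 := by ring
      rw [h2]
      have := sg_ne_zero (ε 0)
      positivity
    rw [huniv, Set.ncard_univ, Nat.card_eq_fintype_card]
    simp
  | succ n hn IH =>
    intro g hg hker
    classical
    set g' : Fin n → ((Fin 2 → ℝ) →ₗ[ℝ] ℝ) := fun i => g i.castSucc with hgdef
    set ℓ : (Fin 2 → ℝ) →ₗ[ℝ] ℝ := g (Fin.last n) with hldef
    have hcne : ∀ i : Fin n, i.castSucc ≠ Fin.last n := fun i => (Fin.castSucc_lt_last i).ne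
    have hg'0 : ∀ i, g' i ≠ 0 := fun i => hg _
    have hker' : ∀ i j, i ≠ j → ∀ v, g' i v = 0 → g' j v = 0 → v = 0 := by
      intro i j hij v h1 h2
      exact hker i.castSucc j.castSucc (by simpa [Fin.castSucc_inj] using hij) v h1 h2
    obtain ⟨v₀, hv₀ne, hv₀ker, hv₀span⟩ := ker_lemma ℓ (hg _)
    have hgv₀ : ∀ i : Fin n, g' i v₀ ≠ 0 := fun i h =>
      hv₀ne (hker i.castSucc (Fin.last n) (hcne i) v₀ h hv₀ker)
    set ε₀ : Fin n → Bool := fun i => decide (0 < g' i v₀) with hε₀def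
    have hpat₀ : Pat g' ε₀ v₀ := by
      intro i
      by_cases h : 0 < g' i v₀
      · have he : ε₀ i = true := by simp [hε₀def, h]
        rw [he]; simpa [sg] using h
      · have hlt : g' i v₀ < 0 := lt_of_le_of_ne (not_lt.mp h) (hgv₀ i)
        have he : ε₀ i = false := by simp [hε₀def, h]
        rw [he]; simp [sg]; linarith
    have hpat₀' : Pat g' (fun i => !ε₀ i) (-v₀) := hpat₀.neg
    -- helper: extending a pattern whose witness is off the kernel
    have ext_nonker : ∀ (ε' : Fin n → Bool) (v : Fin 2 → ℝ), Pat g' ε' v → ℓ v ≠ 0 →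
        Pat g (Fin.snoc ε' (decide (0 < ℓ v))) v := by
      intro ε' v hp hv i
      induction i using Fin.lastCases with
      | last =>
        rw [Fin.snoc_last]
        by_cases h : 0 < ℓ v
        · rw [decide_eq_true h]; simpa [sg] using h
        · have hlt : ℓ v < 0 := lt_of_le_of_ne (not_lt.mp h) hv
          rw [decide_eq_false h]; simp [sg]; linarith
      | cast j =>
        rw [Fin.snoc_castSucc]
        exact hp j
    -- helper: a kernel witness extends both ways
    obtain ⟨w₀, hw₀⟩ := exists_ne_zero_map (hg (Fin.last n))
    have both_ext : ∀ (ε' : Fin n → Bool) (u : Fin 2 → ℝ), Pat g' ε' u → ℓ u = 0 →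
        ∀ b : Bool, ∃ v, Pat g (Fin.snoc ε' b) v := by
      intro ε' u hp hu b
      set w : Fin 2 → ℝ := (sg b * ℓ w₀) • w₀ with hwdef
      have hev := perturb g' ε' u w hp
      obtain ⟨δ, h1, h2⟩ := (hev.and self_mem_nhdsWithin).exists
      have hδpos : (0:ℝ) < δ := h2
      refine ⟨u + δ • w, ?_⟩
      intro i
      induction i using Fin.lastCases with
      | last =>
        rw [Fin.snoc_last]
        have hcalc : sg b * ℓ (u + δ • w) = δ * ((ℓ w₀)^2 * (sg b)^2) := by
          rw [map_add, map_smul, smul_eq_mul, hu, hwdef, map_smul, smul_eq_mul]; ring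
        rw [hcalc]
        have := sg_ne_zero b
        positivity
      | cast j =>
        rw [Fin.snoc_castSucc]
        exact h1 j
    -- helper: kernel witnesses force the pattern to be ±ε₀
    have kerpat : ∀ (ε' : Fin n → Bool) (u : Fin 2 → ℝ), Pat g' ε' u → ℓ u = 0 →
        ε' = ε₀ ∨ ε' = fun i => !ε₀ i := by
      intro ε' u hp hu
      have hune : u ≠ 0 := by
        intro h0
        have := hp ⟨0, hn⟩
        rw [h0] at this; simp at this
      obtain ⟨t, rfl⟩ := hv₀span u hu
      have ht : t ≠ 0 := by rintro rfl; simp at hune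
      rcases ht.lt_or_gt with hlt | hgt
      · right
        have h1 : Pat g' (fun i => !ε' i) (-(t • v₀)) := hp.neg
        rw [show -(t • v₀) = (-t) • v₀ by rw [neg_smul]] at h1
        have h2 : Pat g' (fun i => !ε' i) v₀ := h1.of_smul (by linarith)
        have h3 : (fun i => !ε' i) = ε₀ := h2.unique hpat₀
        funext i
        have := congrFun h3 i
        cases hb : ε' i <;> simp [hb] at this ⊢ <;> simp [← this]
      · left
        exact (hp.of_smul hgt).unique hpat₀
    -- the finsets
    set A : Finset (Fin (n+1) → Bool) := Finset.univ.filter (fun ε => ∃ v, Pat g ε v) with hAdef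
    set B : Finset (Fin n → Bool) := Finset.univ.filter (fun ε => ∃ v, Pat g' ε v) with hBdef
    have restr : ∀ (ε : Fin (n+1) → Bool) v, Pat g ε v → Pat g' (Fin.init ε) v := by
      intro ε v h i
      have := h i.castSucc
      simpa [Fin.init] using this
    have hmap : ∀ ε ∈ A, Fin.init ε ∈ B := by
      intro ε hε
      rw [hAdef, Finset.mem_filter] at hε
      rw [hBdef, Finset.mem_filter]
      obtain ⟨-, v, hv⟩ := hε
      exact ⟨Finset.mem_univ _, v, restr ε v hv⟩
    have hcard := Finset.card_eq_sum_card_fiberwise hmap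
    -- fiber description
    have hfib : ∀ ε' : Fin n → Bool, A.filter (fun ε => Fin.init ε = ε')
        = Finset.image (fun b => Fin.snoc ε' b)
            (Finset.univ.filter fun b : Bool => ∃ v, Pat g (Fin.snoc ε' b) v) := by
      intro ε'
      ext ε
      simp only [hAdef, Finset.mem_filter, Finset.mem_image, Finset.mem_univ, true_and]
      constructor
      · rintro ⟨hreal, hinit⟩
        refine ⟨ε (Fin.last n), ?_, ?_⟩
        · rw [← hinit, Fin.snoc_init_self]; exact hreal
        · rw [← hinit, Fin.snoc_init_self]
      · rintro ⟨b, hreal, rfl⟩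
        exact ⟨hreal, Fin.init_snoc _ _⟩
    have hsnoc_inj : ∀ ε' : Fin n → Bool,
        Function.Injective (fun b : Bool => (Fin.snoc ε' b : Fin (n+1) → Bool)) := by
      intro ε' b b' h
      have := congrFun h (Fin.last n)
      simpa [Fin.snoc_last] using this
    have hε₀ne : ε₀ ≠ fun i => !ε₀ i := by
      intro h
      have := congrFun h ⟨0, hn⟩
      simp at this
    -- fiber cardinality
    have hfibval : ∀ ε' ∈ B, (A.filter (fun ε => Fin.init ε = ε')).card
        = if ε' = ε₀ ∨ ε' = (fun i => !ε₀ i) then 2 else 1 := by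
      intro ε' hε'
      rw [hBdef, Finset.mem_filter] at hε'
      obtain ⟨-, v, hv⟩ := hε'
      rw [hfib ε', Finset.card_image_of_injective _ (hsnoc_inj ε'),
        boolcard]
      by_cases hcase : ε' = ε₀ ∨ ε' = (fun i => !ε₀ i)
      · rw [if_pos hcase]
        have hboth : ∀ b : Bool, ∃ v, Pat g (Fin.snoc ε' b) v := by
          rcases hcase with rfl | rfl
          · exact both_ext _ v₀ hpat₀ hv₀ker
          · exact both_ext _ (-v₀) hpat₀' (by rw [map_neg, hv₀ker, neg_zero])
        rw [if_pos (hboth true), if_pos (hboth false)]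
      · rw [if_neg hcase]
        -- at least one extension
        have hone : ∃ b : Bool, ∃ v, Pat g (Fin.snoc ε' b) v := by
          rcases eq_or_ne (ℓ v) 0 with hz | hz
          · exact absurd (kerpat ε' v hv hz) hcase
          · exact ⟨_, v, ext_nonker ε' v hv hz⟩
        -- not both extensions
        have hnotboth : ¬ ((∃ v, Pat g (Fin.snoc ε' true) v) ∧ (∃ v, Pat g (Fin.snoc ε' false) v)) := by
          rintro ⟨⟨vp, hvp⟩, ⟨vm, hvm⟩⟩
          have hp1 : 0 < ℓ vp := by
            have := hvp (Fin.last n)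
            rw [Fin.snoc_last] at this
            simpa [sg] using this
          have hm1 : ℓ vm < 0 := by
            have := hvm (Fin.last n)
            rw [Fin.snoc_last] at this
            simp [sg] at this
            linarith
          set u : Fin 2 → ℝ := (ℓ vp) • vm - (ℓ vm) • vp with hudef
          have hu0 : ℓ u = 0 := by
            rw [hudef, map_sub, map_smul, map_smul, smul_eq_mul, smul_eq_mul]; ring
          have hpu : Pat g' ε' u := by
            intro i
            have h1 := hvp i.castSucc
            have h2 := hvm i.castSucc
            rw [Fin.snoc_castSucc] at h1 h2
            have hcalc : sg (ε' i) * g' i u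
                = (ℓ vp) * (sg (ε' i) * g' i vm) + (-(ℓ vm)) * (sg (ε' i) * g' i vp) := by
              rw [hudef, map_sub, map_smul, map_smul, smul_eq_mul, smul_eq_mul]; ring
            rw [hcalc]
            have t1 : 0 < (ℓ vp) * (sg (ε' i) * g' i vm) := mul_pos hp1 h2
            have t2 : 0 < (-(ℓ vm)) * (sg (ε' i) * g' i vp) := mul_pos (by linarith) h1
            linarith
          exact hcase (kerpat ε' u hpu hu0)
        rcases hone with ⟨b, hb⟩
        cases b
        · have hnt : ¬ ∃ v, Pat g (Fin.snoc ε' true) v := fun h => hnotboth ⟨h, hb⟩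
          rw [if_neg hnt, if_pos hb]
        · have hnf : ¬ ∃ v, Pat g (Fin.snoc ε' false) v := fun h => hnotboth ⟨hb, h⟩
          rw [if_pos hb, if_neg hnf]
    -- sum it up
    have hsum : A.card = B.card + 2 := by
      rw [hcard, Finset.sum_congr rfl hfibval]
      have hsplit : ∀ ε' ∈ B, (if ε' = ε₀ ∨ ε' = (fun i => !ε₀ i) then (2:ℕ) else 1)
          = 1 + (if ε' = ε₀ ∨ ε' = (fun i => !ε₀ i) then 1 else 0) := by
        intro ε' _; split <;> rfl
      rw [Finset.sum_congr rfl hsplit, Finset.sum_add_distrib, Finset.sum_const, smul_eq_mul,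
        mul_one, Finset.sum_boole]
      have hBfil : B.filter (fun ε' => ε' = ε₀ ∨ ε' = (fun i => !ε₀ i))
          = {ε₀, (fun i => !ε₀ i)} := by
        ext x
        simp only [Finset.mem_filter, Finset.mem_insert, Finset.mem_singleton]
        constructor
        · rintro ⟨-, h⟩; exact h
        · rintro (rfl | rfl)
          · refine ⟨?_, Or.inl rfl⟩
            rw [hBdef, Finset.mem_filter]
            exact ⟨Finset.mem_univ _, v₀, hpat₀⟩
          · refine ⟨?_, Or.inr rfl⟩
            rw [hBdef, Finset.mem_filter]
            exact ⟨Finset.mem_univ _, -v₀, hpat₀'⟩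
      rw [hBfil]
      rw [Finset.card_insert_of_notMem (by simpa using hε₀ne), Finset.card_singleton]
      norm_num
    have hB : B.card = 2 * n := by
      have hIH := IH g' hg'0 hker'
      rwa [ncard_setOf, ← hBdef] at hIH
    rw [ncard_setOf, ← hAdef, hsum, hB]
    ring
lemma affine_decomp (φ : (Fin 2 → ℝ) →ᵃ[ℝ] ℝ) (x : Fin 2 → ℝ) : φ x = φ.linear x + φ 0 := by
  have h := φ.map_vadd 0 x
  simpa [vadd_eq_add] using h

def cell {n : ℕ} (f : Fin n → ((Fin 2 → ℝ) →ᵃ[ℝ] ℝ)) (ε : Fin n → Bool) : Set (Fin 2 → ℝ) :=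
  {x | ∀ i, 0 < sg (ε i) * f i x}

lemma cell_open {n : ℕ} (f : Fin n → ((Fin 2 → ℝ) →ᵃ[ℝ] ℝ)) (ε : Fin n → Bool) :
    IsOpen (cell f ε) := by
  have h : cell f ε = ⋂ i, (fun x => sg (ε i) * f i x) ⁻¹' Set.Ioi 0 := by
    ext x; simp [cell]
  rw [h]
  refine isOpen_iInter_of_finite fun i => ?_
  exact isOpen_Ioi.preimage (continuous_const.mul (f i).continuous_of_finiteDimensional)

lemma cell_convex {n : ℕ} (f : Fin n → ((Fin 2 → ℝ) →ᵃ[ℝ] ℝ)) (ε : Fin n → Bool) :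
    Convex ℝ (cell f ε) := by
  intro x hx y hy a b ha hb hab
  intro i
  have hxa := hx i
  have hyb := hy i
  have hcombo : f i (a • x + b • y) = a • f i x + b • f i y := Convex.combo_affine_apply hab
  have key : 0 < a * (sg (ε i) * f i x) + b * (sg (ε i) * f i y) := by
    rcases ha.lt_or_eq with ha' | ha'
    · have h1 := mul_pos ha' hxa
      have h2 := mul_nonneg hb hyb.le
      linarith
    · have hb' : b = 1 := by linarith
      rw [← ha', hb']
      simpa using hyb
  show 0 < sg (ε i) * f i (a • x + b • y)
  rw [hcombo]
  simp only [smul_eq_mul]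
  have hring : sg (ε i) * (a * f i x + b * f i y)
      = a * (sg (ε i) * f i x) + b * (sg (ε i) * f i y) := by ring
  rw [hring]
  exact key

lemma cell_unique {n : ℕ} {f : Fin n → ((Fin 2 → ℝ) →ᵃ[ℝ] ℝ)} {ε ε' : Fin n → Bool}
    {x : Fin 2 → ℝ} (h : x ∈ cell f ε) (h' : x ∈ cell f ε') : ε = ε' :=
  funext fun i => sg_unique (h i) (h' i)

lemma cell_ray {n : ℕ} (hn : 1 ≤ n) (f : Fin n → ((Fin 2 → ℝ) →ᵃ[ℝ] ℝ)) (ε : Fin n → Bool)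
    (hr : ∃ v, Pat (fun i => (f i).linear) ε v) :
    (cell f ε).Nonempty ∧ ¬ Bornology.IsBounded (cell f ε) := by
  obtain ⟨v, hv⟩ := hr
  have hvne : v ≠ 0 := by
    intro h0
    have := hv (⟨0, hn⟩ : Fin n)
    rw [h0] at this; simp at this
  have hev : ∀ᶠ t : ℝ in Filter.atTop, ∀ i, 0 < sg (ε i) * f i (t • v) := by
    rw [Filter.eventually_all]
    intro i
    have hdecomp : ∀ t : ℝ, sg (ε i) * f i (t • v)
        = t * (sg (ε i) * (f i).linear v) + sg (ε i) * f i 0 := by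
      intro t
      rw [affine_decomp (f i) (t • v), map_smul, smul_eq_mul]; ring
    have hlim : Filter.Tendsto (fun t : ℝ => t * (sg (ε i) * (f i).linear v) + sg (ε i) * f i 0)
        Filter.atTop Filter.atTop :=
      Filter.tendsto_atTop_add_const_right _ _ (Filter.tendsto_id.atTop_mul_const (hv i))
    filter_upwards [hlim.eventually_gt_atTop 0] with t ht
    rw [hdecomp]; exact ht
  have hev' : ∀ᶠ t : ℝ in Filter.atTop, (t • v) ∈ cell f ε := by
    filter_upwards [hev] with t ht using ht
  constructor
  · obtain ⟨t, ht⟩ := hev'.exists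
    exact ⟨t • v, ht⟩
  · intro hb
    rw [isBounded_iff_forall_norm_le] at hb
    obtain ⟨C, hC⟩ := hb
    have hvpos : (0:ℝ) < ‖v‖ := norm_pos_iff.mpr hvne
    obtain ⟨t, ht1, ht2⟩ := (hev'.and (Filter.eventually_ge_atTop ((C+1)/‖v‖ ⊔ 0))).exists
    have hle := hC _ ht1
    have ht0 : 0 ≤ t := le_trans le_sup_right ht2
    have hnorm : ‖t • v‖ = t * ‖v‖ := by
      rw [norm_smul, Real.norm_eq_abs, abs_of_nonneg ht0]
    have h2 : (C+1)/‖v‖ ≤ t := le_trans le_sup_left ht2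
    rw [div_le_iff₀ hvpos] at h2
    rw [hnorm] at hle
    linarith

lemma cell_unbounded_realized {n : ℕ} (hn : 1 ≤ n) (f : Fin n → ((Fin 2 → ℝ) →ᵃ[ℝ] ℝ))
    (hlin : ∀ i, (f i).linear ≠ 0)
    (hker : ∀ i j, i ≠ j → ∀ v, (f i).linear v = 0 → (f j).linear v = 0 → v = 0)
    (ε : Fin n → Bool) (hub : ¬ Bornology.IsBounded (cell f ε)) :
    ∃ v, Pat (fun i => (f i).linear) ε v := by
  have hseq : ∀ k : ℕ, ∃ x, x ∈ cell f ε ∧ (k:ℝ) < ‖x‖ := by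
    by_contra hc
    push_neg at hc
    obtain ⟨k, hk⟩ := hc
    exact hub (isBounded_iff_forall_norm_le.mpr ⟨k, fun x hx => hk x hx⟩)
  choose x hxc hxn using hseq
  have hxpos : ∀ k, (0:ℝ) < ‖x k‖ := fun k => lt_of_le_of_lt (Nat.cast_nonneg k) (hxn k)
  set u : ℕ → (Fin 2 → ℝ) := fun k => ‖x k‖⁻¹ • x k with hudef
  have humem : ∀ k, u k ∈ Metric.sphere (0 : Fin 2 → ℝ) 1 := by
    intro k
    rw [mem_sphere_iff_norm, sub_zero, hudef]
    rw [norm_smul, norm_inv, norm_norm, inv_mul_cancel₀ (hxpos k).ne']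
  obtain ⟨v, hvmem, φ, hφ, hlim⟩ := (isCompact_sphere (0 : Fin 2 → ℝ) 1).tendsto_subseq humem
  have hnormx : Filter.Tendsto (fun k => ‖x (φ k)‖) Filter.atTop Filter.atTop := by
    apply Filter.tendsto_atTop_mono (fun k => ?_) tendsto_natCast_atTop_atTop
    calc (k:ℝ) ≤ (φ k : ℝ) := by exact_mod_cast hφ.le_apply
    _ ≤ ‖x (φ k)‖ := (hxn (φ k)).le
  have hinv : Filter.Tendsto (fun k => ‖x (φ k)‖⁻¹) Filter.atTop (𝓝 0) := by
    exact hnormx.inv_tendsto_atTop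
  have key : ∀ i, 0 ≤ sg (ε i) * (f i).linear v := by
    intro i
    have hcont : Continuous fun y : Fin 2 → ℝ => sg (ε i) * (f i).linear y :=
      continuous_const.mul (f i).linear.continuous_of_finiteDimensional
    have h1 : Filter.Tendsto (fun k => sg (ε i) * (f i).linear (u (φ k))) Filter.atTop
        (𝓝 (sg (ε i) * (f i).linear v)) := (hcont.tendsto v).comp hlim
    have h2 : Filter.Tendsto (fun k => (-(sg (ε i) * f i 0)) * ‖x (φ k)‖⁻¹) Filter.atTop (𝓝 0) := by
      simpa using hinv.const_mul (-(sg (ε i) * f i 0))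
    refine le_of_tendsto_of_tendsto' h2 h1 fun k => ?_
    have hx := hxc (φ k) i
    have hdec : (f i).linear (x (φ k)) = f i (x (φ k)) - f i 0 := by
      rw [affine_decomp (f i) (x (φ k))]; ring
    have hcalc : sg (ε i) * (f i).linear (u (φ k))
        = ‖x (φ k)‖⁻¹ * (sg (ε i) * f i (x (φ k)) - sg (ε i) * f i 0) := by
      rw [hudef]
      simp only
      rw [map_smul, smul_eq_mul, hdec]; ring
    rw [hcalc]
    have hipos : (0:ℝ) < ‖x (φ k)‖⁻¹ := inv_pos.mpr (hxpos _)
    nlinarith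
  have hvne : v ≠ 0 := by
    intro h0
    rw [h0] at hvmem
    simp at hvmem
  exact sharpen (fun i => (f i).linear) hlin hker ε v hvne key
/-- The complement of `n` lines in general position in `ℝ²` has exactly
`2n` unbounded connected components. -/
theorem stmt11 (n : ℕ) (hn : 1 ≤ n) (f : Fin n → ((Fin 2 → ℝ) →ᵃ[ℝ] ℝ))
    (hlin : ∀ i, (f i).linear ≠ 0)
    (L : Fin n → Set (Fin 2 → ℝ)) (hL : ∀ i, L i = (f i) ⁻¹' {0})
    (hpair : ∀ i j, i ≠ j → ∃ p, L i ∩ L j = {p})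
    (htriple : ∀ i j k, i ≠ j → i ≠ k → j ≠ k → L i ∩ L j ∩ L k = ∅)
    (S : Set (Fin 2 → ℝ)) (hS : S = (⋃ i, L i)ᶜ) :
    {T | (∃ x ∈ S, T = connectedComponentIn S x) ∧ ¬ Bornology.IsBounded T}.Finite ∧
    {T | (∃ x ∈ S, T = connectedComponentIn S x) ∧ ¬ Bornology.IsBounded T}.ncard = 2 * n := by
  have hker : ∀ i j, i ≠ j → ∀ v, (f i).linear v = 0 → (f j).linear v = 0 → v = 0 := by
    intro i j hij v h1 h2
    obtain ⟨p, hp⟩ := hpair i j hij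
    have hpmem : p ∈ L i ∩ L j := by rw [hp]; rfl
    have hfi : f i p = 0 := by
      have := hpmem.1; rw [hL i] at this; simpa using this
    have hfj : f j p = 0 := by
      have := hpmem.2; rw [hL j] at this; simpa using this
    have hvi : f i (v + p) = 0 := by
      have hv := (f i).map_vadd p v
      rw [vadd_eq_add] at hv
      rw [hv, vadd_eq_add, h1, hfi, zero_add]
    have hvj : f j (v + p) = 0 := by
      have hv := (f j).map_vadd p v
      rw [vadd_eq_add] at hv
      rw [hv, vadd_eq_add, h2, hfj, zero_add]
    have hmem2 : v + p ∈ L i ∩ L j := by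
      constructor
      · rw [hL i]; simpa using hvi
      · rw [hL j]; simpa using hvj
    rw [hp, Set.mem_singleton_iff] at hmem2
    have : v + p = p := hmem2
    simpa using congrArg (fun z => z - p) this
  have hSf : ∀ x, x ∈ S ↔ ∀ i, f i x ≠ 0 := by
    intro x
    rw [hS]
    simp only [Set.mem_compl_iff, Set.mem_iUnion, not_exists]
    constructor
    · intro h i hfx
      exact h i (by rw [hL i]; simpa using hfx)
    · intro h i hxL
      apply h i
      rw [hL i] at hxL
      simpa using hxL
  have cellS : ∀ ε, cell f ε ⊆ S := by
    intro ε x hx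
    exact (hSf x).mpr fun i => sg_pos_ne (hx i)
  have memcell : ∀ x ∈ S, x ∈ cell f (fun i => decide (0 < f i x)) := by
    intro x hx i
    have hne := (hSf x).mp hx i
    by_cases h : 0 < f i x
    · show 0 < sg (decide (0 < f i x)) * f i x
      rw [decide_eq_true h]
      simpa [sg] using h
    · have hlt : f i x < 0 := lt_of_le_of_ne (not_lt.mp h) hne
      show 0 < sg (decide (0 < f i x)) * f i x
      rw [decide_eq_false h]
      simp only [sg, if_neg Bool.false_ne_true]
      simp
      linarith
  have comp_eq : ∀ x ∈ S, connectedComponentIn S x = cell f (fun i => decide (0 < f i x)) := by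
    intro x hx
    set ε : Fin n → Bool := fun i => decide (0 < f i x) with hεdef
    apply subset_antisymm
    · set V : Set (Fin 2 → ℝ) := ⋃ ε' : {ε' : Fin n → Bool // ε' ≠ ε}, cell f ε'.1 with hV
      have hVopen : IsOpen V := isOpen_iUnion fun ε' => cell_open f ε'.1
      have hdisj : Disjoint (cell f ε) V := by
        rw [Set.disjoint_left]
        rintro y hy hyV
        obtain ⟨ε', hy'⟩ := Set.mem_iUnion.mp hyV
        exact ε'.2 (cell_unique hy' hy)
      have hsub : connectedComponentIn S x ⊆ cell f ε ∪ V := by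
        intro y hy
        have hyS := connectedComponentIn_subset S x hy
        have hycell := memcell y hyS
        rcases eq_or_ne (fun i => decide (0 < f i y)) ε with he | he
        · left; rwa [he] at hycell
        · right; exact Set.mem_iUnion.mpr ⟨⟨_, he⟩, hycell⟩
      exact IsPreconnected.subset_left_of_subset_union (cell_open f ε) hVopen hdisj hsub
        ⟨x, mem_connectedComponentIn hx, memcell x hx⟩ isPreconnected_connectedComponentIn
    · exact IsPreconnected.subset_connectedComponentIn
        (cell_convex f ε).isPreconnected (memcell x hx) (cellS ε)
  set R : Set (Fin n → Bool) := {ε | ∃ v, Pat (fun i => (f i).linear) ε v} with hRdef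
  have hTeq : {T | (∃ x ∈ S, T = connectedComponentIn S x) ∧ ¬ Bornology.IsBounded T}
      = (cell f) '' R := by
    ext T
    simp only [Set.mem_setOf_eq, Set.mem_image]
    constructor
    · rintro ⟨⟨x, hxS, rfl⟩, hub⟩
      rw [comp_eq x hxS] at hub ⊢
      exact ⟨_, cell_unbounded_realized hn f hlin hker _ hub, rfl⟩
    · rintro ⟨ε, hεR, rfl⟩
      obtain ⟨⟨x, hx⟩, hub⟩ := cell_ray hn f ε hεR
      have hxS := cellS ε hx
      have hεx : (fun i => decide (0 < f i x)) = ε := cell_unique (memcell x hxS) hx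
      refine ⟨⟨x, hxS, ?_⟩, hub⟩
      rw [comp_eq x hxS, hεx]
  have hinj : Set.InjOn (cell f) R := by
    intro ε hε ε' hε' he
    obtain ⟨⟨x, hx⟩, -⟩ := cell_ray hn f ε hε
    exact cell_unique hx (he ▸ hx)
  constructor
  · rw [hTeq]
    exact (Set.toFinite R).image _
  · rw [hTeq, Set.ncard_image_of_injOn hinj, hRdef]
    exact count_realized n hn (fun i => (f i).linear) hlin hker
end
end
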